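/- Addition of extensional fuzzy numbers built from the relation S_e agrees with the Zadeh sup–T extension: for all reals x, y, z and all parameters p_x, p_y > 0, the supremum over a ∈ ℝ of S_e(p_x)(x,a) · S_e(p_y)(y, z − a) equals S_e(max(p_x,p_y))(x + y, z); i.e., the product-t-norm extension sum of x_{S_e(p_x)} and y_{S_e(p_y)} is the extensional fuzzy number (x+y)_{S_e(max(p_x,p_y))}. -/
import Mathlib


/-- The relation `S_e(p)(x,y) = exp(-|x - y|/p)`. -/
noncomputable def Se (p x y : ℝ) : ℝ := Real.exp (-(|x - y| / p))

theorem Se_addition (x y z px py : ℝ) (hpx : 0 < px) (hpy : 0 < py) :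
    (⨆ a : ℝ, Se px x a * Se py y (z - a)) = Se (max px py) (x + y) z := by
  have hM : 0 < max px py := lt_max_of_lt_left hpx
  have hub : ∀ a : ℝ, Se px x a * Se py y (z - a) ≤ Se (max px py) (x + y) z := by
    intro a
    unfold Se
    rw [← Real.exp_add]
    apply Real.exp_le_exp.mpr
    have h1 : |x + y - z| ≤ |x - a| + |y - (z - a)| := by
      have : x + y - z = (x - a) + (y - (z - a)) := by ring
      rw [this]; exact abs_add_le _ _
    have h2 : |x - a| / max px py ≤ |x - a| / px :=
      div_le_div_of_nonneg_left (abs_nonneg _) hpx (le_max_left _ _)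
    have h3 : |y - (z - a)| / max px py ≤ |y - (z - a)| / py :=
      div_le_div_of_nonneg_left (abs_nonneg _) hpy (le_max_right _ _)
    have h4 : |x + y - z| / max px py ≤ (|x - a| + |y - (z - a)|) / max px py :=
      by gcongr
    rw [add_div] at h4
    linarith [div_nonneg (abs_nonneg (x - a)) hM.le]
  have hbdd : BddAbove (Set.range fun a : ℝ => Se px x a * Se py y (z - a)) :=
    ⟨Se (max px py) (x + y) z, fun v ⟨a, ha⟩ => ha ▸ hub a⟩
  apply le_antisymm (ciSup_le hub)
  rcases max_cases px py with ⟨hmax, hle⟩ | ⟨hmax, hlt⟩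
  · have := le_ciSup hbdd (z - y)
    refine le_trans ?_ this
    unfold Se
    simp only [sub_sub_cancel, sub_self, abs_zero, zero_div, neg_zero, Real.exp_zero, mul_one]
    rw [hmax]
    have : |x + y - z| = |x - (z - y)| := by congr 1; ring
    rw [this]
  · have := le_ciSup hbdd x
    refine le_trans ?_ this
    unfold Se
    simp only [sub_self, abs_zero, zero_div, neg_zero, Real.exp_zero, one_mul]
    rw [hmax]
    have : |x + y - z| = |y - (z - x)| := by congr 1; ring
    rw [this]
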